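/- Let (g, ∂, [·,·]) be a dg Lie algebra with a complete decreasing filtration (F^m g)_m by subcomplexes satisfying [F^m, F^{m'}] ⊆ F^{m+m'}, and let x̄, Δ ∈ g_{−1} with Δ ∈ F^{N} g for some N ≥ 1 and x̄ ∈ F^1 g. If ∂x̄ − (1/2)[x̄, x̄] ∈ F^{N} g and ∂Δ + (∂x̄ − (1/2)[x̄,x̄]) ∈ F^{N+1} g, then setting x̄' := x̄ + Δ, one has ∂x̄' − (1/2)[x̄', x̄'] ∈ F^{N+1} g. -/
import Mathlib


/-- Transport along an equality of degrees in a ℤ-graded family. -/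
def trC {F : ℤ → Type*} {i j : ℤ} (h : i = j) (x : F i) : F j := h ▸ x

/-- Let `g` be a dg Lie algebra with a complete decreasing filtration
`(F^m g)` by subcomplexes satisfying `[F^m, F^{m'}] ⊆ F^{m+m'}`, and let `x̄, Δ ∈ g_{−1}`
with `Δ ∈ F^N` (`N ≥ 1`) and `x̄ ∈ F^1`. If `∂x̄ − (1/2)[x̄, x̄] ∈ F^N` and
`∂Δ + (∂x̄ − (1/2)[x̄,x̄]) ∈ F^{N+1}`, then `x̄' := x̄ + Δ` satisfies
`∂x̄' − (1/2)[x̄', x̄'] ∈ F^{N+1}`. -/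
theorem stmt10 {K : Type*} [Field K] [CharZero K]
    (G : ℤ → Type*) [∀ i, AddCommGroup (G i)] [∀ i, Module K (G i)]
    (d : ∀ i, G i →ₗ[K] G (i - 1))
    (br : ∀ i j, G i →ₗ[K] G j →ₗ[K] G (i + j))
    (hd : ∀ (i : ℤ) (a : G i), d (i - 1) (d i a) = 0)
    (hanti : ∀ (i j : ℤ) (a : G i) (b : G j),
      br i j a b = -((-1 : K) ^ (i * j)) • trC (show j + i = i + j by omega) (br j i b a))
    (hleib : ∀ (i j : ℤ) (a : G i) (b : G j),
      d (i + j) (br i j a b)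
        = trC (show i - 1 + j = i + j - 1 by omega) (br (i - 1) j (d i a) b)
          + (-1 : K) ^ i • trC (show i + (j - 1) = i + j - 1 by omega) (br i (j - 1) a (d j b)))
    (hjac : ∀ (i j k : ℤ) (a : G i) (b : G j) (c : G k),
      br i (j + k) a (br j k b c)
        + (-1 : K) ^ (i * (j + k)) •
            trC (show j + (k + i) = i + (j + k) by omega) (br j (k + i) b (br k i c a))
        + (-1 : K) ^ (k * (i + j)) •
            trC (show k + (i + j) = i + (j + k) by omega) (br k (i + j) c (br i j a b)) = 0)
    -- the filtration, by subcomplexes, decreasing, compatible with the bracket, complete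
    (F : ℤ → ∀ i, Submodule K (G i))
    (hdec : ∀ m m' : ℤ, m ≤ m' → ∀ i, F m' i ≤ F m i)
    (hdF : ∀ (m i : ℤ) (v : G i), v ∈ F m i → d i v ∈ F m (i - 1))
    (hbrF : ∀ (m m' i j : ℤ) (v : G i) (w : G j),
      v ∈ F m i → w ∈ F m' j → br i j v w ∈ F (m + m') (i + j))
    (hcomplete : ∀ (i c : ℤ) (x : ℕ → G i), (∀ j : ℕ, x (j + 1) - x j ∈ F (c + j) i) →
      ∃ l : G i, ∀ j : ℕ, l - x j ∈ F (c + j) i)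
    (N : ℤ) (hN : 1 ≤ N)
    (xb Δ : G (-1)) (hΔ : Δ ∈ F N (-1)) (hxb : xb ∈ F 1 (-1))
    (h1 : d (-1) xb - (1 / 2 : K) •
        trC (show (-1 : ℤ) + (-1) = (-1) - 1 by omega) (br (-1) (-1) xb xb)
        ∈ F N ((-1) - 1))
    (h2 : d (-1) Δ + (d (-1) xb - (1 / 2 : K) •
        trC (show (-1 : ℤ) + (-1) = (-1) - 1 by omega) (br (-1) (-1) xb xb))
        ∈ F (N + 1) ((-1) - 1)) :
    d (-1) (xb + Δ) - (1 / 2 : K) •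
        trC (show (-1 : ℤ) + (-1) = (-1) - 1 by omega) (br (-1) (-1) (xb + Δ) (xb + Δ))
      ∈ F (N + 1) ((-1) - 1) := by
  let B : G (-1) →ₗ[K] G (-1) →ₗ[K] G ((-1 : ℤ) - 1) := br (-1) (-1)
  show d (-1) (xb + Δ) - (1 / 2 : K) • B (xb + Δ) (xb + Δ) ∈ F (N + 1) ((-1) - 1)
  have h2' : d (-1) Δ + (d (-1) xb - (1 / 2 : K) • B xb xb) ∈ F (N + 1) ((-1) - 1) := h2
  have hexp : d (-1) (xb + Δ) - (1 / 2 : K) • B (xb + Δ) (xb + Δ)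
      = (d (-1) Δ + (d (-1) xb - (1 / 2 : K) • B xb xb))
        - (1 / 2 : K) • B xb Δ
        - (1 / 2 : K) • B Δ xb
        - (1 / 2 : K) • B Δ Δ := by
    simp only [map_add, LinearMap.add_apply, smul_add]
    abel
  rw [hexp]
  have hxΔ : B xb Δ ∈ F (N + 1) ((-1) - 1) := by
    have h := hbrF 1 N (-1) (-1) xb Δ hxb hΔ
    rw [add_comm 1 N] at h
    exact h
  have hΔx : B Δ xb ∈ F (N + 1) ((-1) - 1) := hbrF N 1 (-1) (-1) Δ xb hΔ hxb
  have hΔΔ : B Δ Δ ∈ F (N + 1) ((-1) - 1) :=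
    hdec (N + 1) (N + N) (by omega) _ (hbrF N N (-1) (-1) Δ Δ hΔ hΔ)
  exact Submodule.sub_mem _ (Submodule.sub_mem _ (Submodule.sub_mem _ h2'
    (Submodule.smul_mem _ _ hxΔ)) (Submodule.smul_mem _ _ hΔx))
    (Submodule.smul_mem _ _ hΔΔ)
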